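/- Fix real numbers σ > 0 and c > 0. The smoothed hinge loss g^σ_c : ℝ → ℝ is differentiable at every s ∈ ℝ, and its derivative is g^σ_c'(s) = −ν*(s), where ν*(s) = min(max((1 − s)/(σc), 0), 1). -/

import Mathlib

/-- The smoothed hinge loss g^σ_c in piecewise closed form. -/
noncomputable def smoothedHinge (σ c s : ℝ) : ℝ :=
  if 1 < s then 0
  else if s < 1 - σ * c then (1 - s) - σ * c / 2
  else (1 - s) ^ 2 / (2 * σ * c)

/-- The clipped value ν*(s) = min(max((1 − s)/(σc), 0), 1). -/
noncomputable def nuStar (σ c s : ℝ) : ℝ := min (max ((1 - s) / (σ * c)) 0) 1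

lemma sq_max_hasDerivAt (x : ℝ) :
    HasDerivAt (fun y : ℝ => max y 0 ^ 2) (2 * max x 0) x := by
  rcases lt_trichotomy x 0 with hx | hx | hx
  · have h0 : (2 : ℝ) * max x 0 = 0 := by rw [max_eq_right hx.le]; ring
    rw [h0]
    have : (fun y : ℝ => max y 0 ^ 2) =ᶠ[nhds x] fun _ => (0 : ℝ) := by
      filter_upwards [eventually_lt_nhds hx] with y hy
      rw [max_eq_right hy.le]; ring
    exact (hasDerivAt_const x (0:ℝ)).congr_of_eventuallyEq this
  · subst hx
    have h0 : (2 : ℝ) * max 0 0 = 0 := by simp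
    rw [h0, hasDerivAt_iff_isLittleO]
    simp only [sub_zero, smul_zero, max_self, ne_eq, zero_pow, sub_zero]
    rw [Asymptotics.isLittleO_iff]
    intro ε hε
    filter_upwards [Metric.eventually_nhds_iff.mpr ⟨ε, hε, fun {y} hy => hy⟩] with y hy
    have hy' : |y| < ε := by simpa [Real.dist_eq] using hy
    have h1 : max y 0 ^ 2 ≤ y ^ 2 := by
      rcases le_or_gt y 0 with h | h
      · rw [max_eq_right h]; nlinarith
      · rw [max_eq_left h.le]
    have h2 : (0:ℝ) ≤ max y 0 ^ 2 := by positivity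
    have hgoal : ((y ⊔ 0) ^ 2 - 0 ^ 2 : ℝ) = max y 0 ^ 2 := by norm_num
    rw [hgoal, Real.norm_eq_abs, Real.norm_eq_abs, abs_of_nonneg h2]
    calc max y 0 ^ 2 ≤ y ^ 2 := h1
      _ ≤ ε * |y| := by nlinarith [abs_mul_abs_self y, abs_nonneg y]
  · have h0 : (2 : ℝ) * max x 0 = 2 * x := by rw [max_eq_left hx.le]
    rw [h0]
    have : (fun y : ℝ => max y 0 ^ 2) =ᶠ[nhds x] fun y => y ^ 2 := by
      filter_upwards [eventually_gt_nhds hx] with y hy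
      rw [max_eq_left hy.le]
    have hd : HasDerivAt (fun y : ℝ => y ^ 2) (2 * x) x := by
      simpa using (hasDerivAt_pow 2 x)
    exact hd.congr_of_eventuallyEq this

lemma smoothedHinge_eq (σ c : ℝ) (hσ : 0 < σ) (hc : 0 < c) :
    smoothedHinge σ c = fun s =>
      (max (1 - s) 0 ^ 2 - max (1 - s - σ * c) 0 ^ 2) / (2 * σ * c) := by
  funext s
  have hsc : 0 < σ * c := mul_pos hσ hc
  unfold smoothedHinge
  split_ifs with h1 h2
  · rw [max_eq_right (by linarith), max_eq_right (by linarith)]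
    simp
  · rw [max_eq_left (by linarith), max_eq_left (by linarith)]
    field_simp
    ring
  · rw [max_eq_left (by linarith), max_eq_right (by linarith)]
    field_simp
    ring

/-- for σ > 0 and c > 0, the smoothed hinge loss is differentiable at every
s ∈ ℝ with derivative −ν*(s). -/
theorem stmt_3 (σ c : ℝ) (hσ : 0 < σ) (hc : 0 < c) (s : ℝ) :
    HasDerivAt (smoothedHinge σ c) (-(nuStar σ c s)) s := by
  have hsc : 0 < σ * c := mul_pos hσ hc
  rw [smoothedHinge_eq σ c hσ hc]
  have h1 : HasDerivAt (fun y : ℝ => max (1 - y) 0 ^ 2) (2 * max (1 - s) 0 * (-1)) s := by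
    have := (sq_max_hasDerivAt (1 - s)).comp s
      (((hasDerivAt_id s).const_sub 1) : HasDerivAt (fun y : ℝ => 1 - y) (-1) s)
    simpa [Function.comp_def] using this
  have h2 : HasDerivAt (fun y : ℝ => max (1 - y - σ * c) 0 ^ 2)
      (2 * max (1 - s - σ * c) 0 * (-1)) s := by
    have hlin : HasDerivAt (fun y : ℝ => 1 - y - σ * c) (-1) s := by
      simpa using (((hasDerivAt_id s).const_sub 1).sub_const (σ * c))
    have := (sq_max_hasDerivAt (1 - s - σ * c)).comp s hlin
    simpa [Function.comp_def] using this
  have hD := (h1.sub h2).div_const (2 * σ * c)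
  have hval : (2 * max (1 - s) 0 * (-1) - 2 * max (1 - s - σ * c) 0 * (-1)) / (2 * σ * c)
      = -(nuStar σ c s) := by
    unfold nuStar
    rcases le_or_gt (1 - s) 0 with h | h
    · rw [max_eq_right h, max_eq_right (by linarith)]
      rw [max_eq_right (div_nonpos_of_nonpos_of_nonneg h hsc.le)]
      simp
    · rcases le_or_gt (1 - s - σ * c) 0 with h' | h'
      · rw [max_eq_left h.le, max_eq_right h']
        have hle : (1 - s) / (σ * c) ≤ 1 := by
          rw [div_le_one hsc]; linarith
        rw [max_eq_left (le_of_lt (div_pos h hsc)), min_eq_left hle]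
        field_simp
        ring
      · rw [max_eq_left h.le, max_eq_left h'.le]
        have hge : (1:ℝ) ≤ (1 - s) / (σ * c) := by
          rw [le_div_iff₀ hsc]; linarith
        rw [max_eq_left (by linarith), min_eq_right hge]
        field_simp
        ring
  rw [← hval]
  exact hD
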